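/- Let $W$ be the Weyl group of a simply-laced (crystallographic, all roots of equal length) root system $\Phi$ with positive roots $\Phi_+$ and highest root $\alpha_0$. Then for any root $\alpha\in\Phi$, the minimum Coxeter length $d(\alpha_0,\alpha)$ of an element $w\in W$ with $w(\alpha_0)=\alpha$ equals $\mathrm{ht}(\alpha_0)-\mathrm{ht}(\alpha)$ if $\alpha\in\Phi_+$, and equals $\mathrm{ht}(\alpha_0)-\mathrm{ht}(\alpha)-1$ if $\alpha\in-\Phi_+$. -/

import Mathlib

noncomputable section

/-- The standard inner product on `ℝ^ℓ`. -/
def rdot {ℓ : ℕ} (u v : Fin ℓ → ℝ) : ℝ := ∑ i, u i * v i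

/-- The orthogonal reflection of `v` in the hyperplane normal to `α`. -/
def rrefl {ℓ : ℕ} (α v : Fin ℓ → ℝ) : Fin ℓ → ℝ :=
  v - (2 * rdot v α / rdot α α) • α

/-- `Φ` is a (reduced) crystallographic root system in `ℝ^ℓ`: a finite set of nonzero
vectors, stable under the reflections in its elements, with integral Cartan numbers
`2(β,α)/(α,α) ∈ ℤ`, and with `±α` the only multiples of a root `α` that are roots. -/
structure IsCrystalRootSystem {ℓ : ℕ} (Φ : Finset (Fin ℓ → ℝ)) : Prop where
  nonzero : ∀ α ∈ Φ, α ≠ 0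
  stable : ∀ α ∈ Φ, ∀ β ∈ Φ, rrefl α β ∈ Φ
  crystal : ∀ α ∈ Φ, ∀ β ∈ Φ, ∃ k : ℤ, 2 * rdot β α = k * rdot α α
  reduced : ∀ α ∈ Φ, ∀ c : ℝ, c • α ∈ Φ → c = 1 ∨ c = -1

/-- `Φ` is irreducible: it admits no nontrivial partition into two mutually
orthogonal parts. -/
def IsIrreducibleRS {ℓ : ℕ} (Φ : Finset (Fin ℓ → ℝ)) : Prop :=
  ∀ A : Finset (Fin ℓ → ℝ), A ⊆ Φ →
    (∀ a ∈ A, ∀ b ∈ Φ, b ∉ A → rdot a b = 0) → A = ∅ ∨ A = Φ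

/-- All roots of `Φ` have equal length (together with crystallographic, this is the
"simply-laced" condition). -/
def IsEqualLengthRS {ℓ : ℕ} (Φ : Finset (Fin ℓ → ℝ)) : Prop :=
  ∀ α ∈ Φ, ∀ β ∈ Φ, rdot α α = rdot β β

/-- `Δ` is a base of simple roots for `Φ`, with (unique, by linear independence)
integral coefficient function `C`: every root `β` satisfies `β = ∑ i (C β i) • Δ i`
with the integers `C β i` either all nonnegative (`β` a positive root) or all
nonpositive (`β` a negative root). -/
def IsBase {ℓ : ℕ} (Φ : Finset (Fin ℓ → ℝ)) (Δ : Fin ℓ → (Fin ℓ → ℝ))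
    (C : (Fin ℓ → ℝ) → Fin ℓ → ℤ) : Prop :=
  (∀ i, Δ i ∈ Φ) ∧ LinearIndependent ℝ Δ ∧
    ∀ β ∈ Φ, (β = ∑ i, (C β i : ℝ) • Δ i) ∧ ((∀ i, 0 ≤ C β i) ∨ (∀ i, C β i ≤ 0))

/-- The height `ht(β) = ∑ i c_i` of a root `β = ∑ i c_i • Δ i`. -/
def htC {ℓ : ℕ} (C : (Fin ℓ → ℝ) → Fin ℓ → ℤ) (β : Fin ℓ → ℝ) : ℤ := ∑ i, C β i

end

noncomputable section

/-- Apply a word in the simple reflections (reflections in the simple roots `Δ i`)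
to the vector `v`. -/
def applyWord {ℓ : ℕ} (Δ : Fin ℓ → (Fin ℓ → ℝ)) (w : List (Fin ℓ)) (v : Fin ℓ → ℝ) :
    Fin ℓ → ℝ :=
  w.foldr (fun i u => rrefl (Δ i) u) v

/-- `d(α₀, α)`: the minimal Coxeter length of an element `w` of the Weyl group
(generated by the simple reflections) with `w(α₀) = α`, i.e. the least length of a
word in the simple reflections carrying `α₀` to `α`. -/
def wordDist {ℓ : ℕ} (Δ : Fin ℓ → (Fin ℓ → ℝ)) (α₀ α : Fin ℓ → ℝ) : ℕ :=
  sInf {k | ∃ w : List (Fin ℓ), w.length = k ∧ applyWord Δ w α₀ = α}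

section Basic
variable {ℓ : ℕ}

lemma rdot_comm (u v : Fin ℓ → ℝ) : rdot u v = rdot v u := by
  simp [rdot, mul_comm]

lemma rdot_add_left (u v w : Fin ℓ → ℝ) : rdot (u + v) w = rdot u w + rdot v w := by
  simp [rdot, add_mul, Finset.sum_add_distrib]

lemma rdot_sub_left (u v w : Fin ℓ → ℝ) : rdot (u - v) w = rdot u w - rdot v w := by
  simp [rdot, sub_mul, Finset.sum_sub_distrib]

lemma rdot_smul_left (c : ℝ) (u v : Fin ℓ → ℝ) : rdot (c • u) v = c * rdot u v := by
  simp [rdot, Finset.mul_sum, mul_assoc]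

lemma rdot_neg_left (u v : Fin ℓ → ℝ) : rdot (-u) v = - rdot u v := by
  simp [rdot, Finset.sum_neg_distrib]

lemma rdot_add_right (u v w : Fin ℓ → ℝ) : rdot u (v + w) = rdot u v + rdot u w := by
  rw [rdot_comm, rdot_add_left, rdot_comm v u, rdot_comm w u]

lemma rdot_sub_right (u v w : Fin ℓ → ℝ) : rdot u (v - w) = rdot u v - rdot u w := by
  rw [rdot_comm, rdot_sub_left, rdot_comm v u, rdot_comm w u]

lemma rdot_smul_right (c : ℝ) (u v : Fin ℓ → ℝ) : rdot u (c • v) = c * rdot u v := by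
  rw [rdot_comm, rdot_smul_left, rdot_comm]

lemma rdot_neg_right (u v : Fin ℓ → ℝ) : rdot u (-v) = - rdot u v := by
  rw [rdot_comm, rdot_neg_left, rdot_comm]

lemma rdot_sum_left {m : ℕ} (f : Fin m → (Fin ℓ → ℝ)) (v : Fin ℓ → ℝ) :
    rdot (∑ j, f j) v = ∑ j, rdot (f j) v := by
  simp only [rdot]
  rw [Finset.sum_comm]
  congr 1; funext i
  simp [Finset.sum_mul, Finset.sum_apply]

lemma rdot_self_nonneg (v : Fin ℓ → ℝ) : 0 ≤ rdot v v :=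
  Finset.sum_nonneg fun i _ => mul_self_nonneg _

lemma rdot_self_eq_zero {v : Fin ℓ → ℝ} (h : rdot v v = 0) : v = 0 := by
  funext i
  have := (Finset.sum_eq_zero_iff_of_nonneg (fun j _ => mul_self_nonneg (v j))).mp h i (Finset.mem_univ i)
  have := mul_self_eq_zero.mp this
  simpa using this

lemma rdot_self_pos {v : Fin ℓ → ℝ} (h : v ≠ 0) : 0 < rdot v v := by
  rcases lt_or_eq_of_le (rdot_self_nonneg v) with h' | h'
  · exact h'
  · exact absurd (rdot_self_eq_zero h'.symm) h

lemma rrefl_neg (α v : Fin ℓ → ℝ) : rrefl α (-v) = - rrefl α v := by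
  simp only [rrefl, rdot_neg_left]
  funext i
  simp only [Pi.sub_apply, Pi.neg_apply, Pi.smul_apply, smul_eq_mul]
  ring

end Basic


section RS
variable {ℓ : ℕ} {Φ : Finset (Fin ℓ → ℝ)}

/-- Main Cartan-integer lemma for equal-length root systems. -/
lemma exists_cartan (hΦ : IsCrystalRootSystem Φ) (hsl : IsEqualLengthRS Φ)
    {α β : Fin ℓ → ℝ} (hα : α ∈ Φ) (hβ : β ∈ Φ) :
    ∃ k : ℤ, rrefl α β = β - (k : ℝ) • α ∧ 2 * rdot β α = k * rdot α α ∧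
      -2 ≤ k ∧ k ≤ 2 ∧ (k = 2 → β = α) ∧ (k = -2 → β = -α) := by
  obtain ⟨k, hk⟩ := hΦ.crystal α hα β hβ
  have hN : 0 < rdot α α := rdot_self_pos (hΦ.nonzero α hα)
  have hNβ : rdot β β = rdot α α := hsl β hβ α hα
  have hscal : 2 * rdot β α / rdot α α = (k : ℝ) := by
    rw [hk]; field_simp
  have hsum : rdot (β + α) (β + α) = (2 + k) * rdot α α := by
    rw [rdot_add_left, rdot_add_right, rdot_add_right, hNβ, rdot_comm α β]
    nlinarith [hk]
  have hdiff : rdot (β - α) (β - α) = (2 - k) * rdot α α := by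
    rw [rdot_sub_left, rdot_sub_right, rdot_sub_right, hNβ, rdot_comm α β]
    nlinarith [hk]
  have hk2 : k ≤ 2 := by
    by_contra h
    have : (2 - (k:ℝ)) * rdot α α < 0 := by
      apply mul_neg_of_neg_of_pos _ hN
      have : (2:ℤ) < k := by omega
      have : (2:ℝ) < (k:ℝ) := by exact_mod_cast this
      linarith
    linarith [rdot_self_nonneg (β - α), hdiff]
  have hkm2 : -2 ≤ k := by
    by_contra h
    have : (2 + (k:ℝ)) * rdot α α < 0 := by
      apply mul_neg_of_neg_of_pos _ hN
      have : k < -2 := by omega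
      have : (k:ℝ) < -2 := by exact_mod_cast this
      linarith
    linarith [rdot_self_nonneg (β + α), hsum]
  refine ⟨k, ?_, hk, hkm2, hk2, ?_, ?_⟩
  · rw [rrefl, hscal]
  · intro h
    have : rdot (β - α) (β - α) = 0 := by rw [hdiff, h]; norm_num
    have := rdot_self_eq_zero this
    funext i
    have := congrFun this i
    simpa [sub_eq_zero] using this
  · intro h
    have : rdot (β + α) (β + α) = 0 := by rw [hsum, h]; norm_num
    have := rdot_self_eq_zero this
    funext i
    have := congrFun this i
    simp only [Pi.add_apply, Pi.zero_apply, Pi.neg_apply] at this ⊢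
    linarith

lemma rs_neg_mem (hΦ : IsCrystalRootSystem Φ) {α : Fin ℓ → ℝ} (hα : α ∈ Φ) : -α ∈ Φ := by
  have hN : 0 < rdot α α := rdot_self_pos (hΦ.nonzero α hα)
  have : rrefl α α = -α := by
    rw [rrefl]
    have : 2 * rdot α α / rdot α α = 2 := by field_simp
    rw [this]
    funext i; simp; ring
  rw [← this]; exact hΦ.stable α hα α hα

/-- If `⟨β,α⟩ < 0` and `β ≠ -α`, then `β + α` is a root. -/
lemma rs_add_mem (hΦ : IsCrystalRootSystem Φ) (hsl : IsEqualLengthRS Φ)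
    {α β : Fin ℓ → ℝ} (hα : α ∈ Φ) (hβ : β ∈ Φ) (hneg : rdot β α < 0) (hne : β ≠ -α) :
    β + α ∈ Φ := by
  obtain ⟨k, hrefl, hk, hkm2, hk2, h2, hm2⟩ := exists_cartan hΦ hsl hα hβ
  have hN : 0 < rdot α α := rdot_self_pos (hΦ.nonzero α hα)
  have hklt : k < 0 := by
    by_contra h
    push_neg at h
    have : (0:ℝ) ≤ (k:ℝ) := by exact_mod_cast h
    nlinarith
  have hkne : k ≠ -2 := fun h => hne (hm2 h)
  have hkeq : k = -1 := by omega
  have : rrefl α β = β + α := by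
    rw [hrefl, hkeq]; funext i; simp
  rw [← this]; exact hΦ.stable α hα β hβ

/-- If `⟨β,α⟩ > 0` and `β ≠ α`, then `β - α` is a root. -/
lemma rs_sub_mem (hΦ : IsCrystalRootSystem Φ) (hsl : IsEqualLengthRS Φ)
    {α β : Fin ℓ → ℝ} (hα : α ∈ Φ) (hβ : β ∈ Φ) (hpos : 0 < rdot β α) (hne : β ≠ α) :
    β - α ∈ Φ := by
  obtain ⟨k, hrefl, hk, hkm2, hk2, h2, hm2⟩ := exists_cartan hΦ hsl hα hβ
  have hN : 0 < rdot α α := rdot_self_pos (hΦ.nonzero α hα)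
  have hklt : 0 < k := by
    by_contra h
    push_neg at h
    have : (k:ℝ) ≤ 0 := by exact_mod_cast h
    nlinarith
  have hkne : k ≠ 2 := fun h => hne (h2 h)
  have hkeq : k = 1 := by omega
  have : rrefl α β = β - α := by
    rw [hrefl, hkeq]; funext i; simp
  rw [← this]; exact hΦ.stable α hα β hβ

end RS


section Coeff
variable {ℓ : ℕ} {Φ : Finset (Fin ℓ → ℝ)} {Δ : Fin ℓ → (Fin ℓ → ℝ)}
  {C : (Fin ℓ → ℝ) → Fin ℓ → ℤ}

lemma coeff_unique (hli : LinearIndependent ℝ Δ) {c d : Fin ℓ → ℝ}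
    (h : ∑ i, c i • Δ i = ∑ i, d i • Δ i) : c = d := by
  have h0 : ∑ i, (c i - d i) • Δ i = 0 := by
    simp [sub_smul, Finset.sum_sub_distrib, h]
  have := Fintype.linearIndependent_iff.mp hli (fun i => c i - d i) h0
  funext i
  have h2 := this i
  linarith

lemma C_eq_of (hbase : IsBase Φ Δ C) {β : Fin ℓ → ℝ} (hβ : β ∈ Φ) (c : Fin ℓ → ℤ)
    (h : β = ∑ i, (c i : ℝ) • Δ i) : C β = c := by
  have h1 : β = ∑ i, (C β i : ℝ) • Δ i := (hbase.2.2 β hβ).1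
  have := coeff_unique hbase.2.1 (h1.symm.trans h)
  funext i
  exact_mod_cast congrFun this i

lemma C_neg (hΦ : IsCrystalRootSystem Φ) (hbase : IsBase Φ Δ C) {β : Fin ℓ → ℝ}
    (hβ : β ∈ Φ) (hnβ : -β ∈ Φ) : C (-β) = -C β := by
  apply C_eq_of hbase hnβ
  have h1 : β = ∑ i, (C β i : ℝ) • Δ i := (hbase.2.2 β hβ).1
  rw [show -β = -∑ i, (C β i : ℝ) • Δ i from by rw [← h1]]
  rw [← Finset.sum_neg_distrib]
  congr 1; funext i
  simp only [Pi.neg_apply]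
  push_cast
  rw [neg_smul]

lemma C_simple (hbase : IsBase Φ Δ C) (j : Fin ℓ) :
    C (Δ j) = fun i => if i = j then 1 else 0 := by
  apply C_eq_of hbase (hbase.1 j)
  rw [Finset.sum_eq_single j]
  · simp
  · intro i _ hne; simp [hne]
  · intro h; exact absurd (Finset.mem_univ j) h

lemma C_sub_smul (hbase : IsBase Φ Δ C) {β : Fin ℓ → ℝ} (hβ : β ∈ Φ) (k : ℤ) (j : Fin ℓ)
    (hmem : β - (k : ℝ) • Δ j ∈ Φ) :
    C (β - (k : ℝ) • Δ j) = fun i => C β i - if i = j then k else 0 := by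
  apply C_eq_of hbase hmem
  have h1 : β = ∑ i, (C β i : ℝ) • Δ i := (hbase.2.2 β hβ).1
  have h2 : (k:ℝ) • Δ j = ∑ i, ((if i = j then (k:ℝ) else 0)) • Δ i := by
    rw [Finset.sum_eq_single j]
    · simp
    · intro i _ hne; simp [hne]
    · intro h; exact absurd (Finset.mem_univ j) h
  rw [show β - (k:ℝ) • Δ j = (∑ i, (C β i : ℝ) • Δ i) - ∑ i, ((if i = j then (k:ℝ) else 0)) • Δ i
      from by rw [← h1, ← h2]]
  rw [← Finset.sum_sub_distrib]
  congr 1; funext i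
  rw [← sub_smul]
  congr 1
  push_cast
  split <;> simp

lemma C_ne_zero (hΦ : IsCrystalRootSystem Φ) (hbase : IsBase Φ Δ C) {β : Fin ℓ → ℝ}
    (hβ : β ∈ Φ) : ∃ i, C β i ≠ 0 := by
  by_contra h
  push_neg at h
  have h1 : β = ∑ i, (C β i : ℝ) • Δ i := (hbase.2.2 β hβ).1
  have : β = 0 := by
    rw [h1]; apply Finset.sum_eq_zero; intro i _; rw [h i]; simp
  exact hΦ.nonzero β hβ this

lemma htC_sub_smul (hbase : IsBase Φ Δ C) {β : Fin ℓ → ℝ} (hβ : β ∈ Φ) (k : ℤ) (j : Fin ℓ)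
    (hmem : β - (k : ℝ) • Δ j ∈ Φ) :
    htC C (β - (k : ℝ) • Δ j) = htC C β - k := by
  unfold htC
  rw [C_sub_smul hbase hβ k j hmem]
  rw [Finset.sum_sub_distrib, Finset.sum_ite_eq' Finset.univ j, if_pos (Finset.mem_univ j)]

lemma htC_neg (hΦ : IsCrystalRootSystem Φ) (hbase : IsBase Φ Δ C) {β : Fin ℓ → ℝ}
    (hβ : β ∈ Φ) (hnβ : -β ∈ Φ) : htC C (-β) = -htC C β := by
  unfold htC
  rw [C_neg hΦ hbase hβ hnβ]
  simp

lemma htC_simple (hbase : IsBase Φ Δ C) (j : Fin ℓ) : htC C (Δ j) = 1 := by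
  unfold htC
  rw [C_simple hbase j]
  simp

/-- positive root has height ≥ 1 -/
lemma htC_pos_of_nonneg (hΦ : IsCrystalRootSystem Φ) (hbase : IsBase Φ Δ C)
    {β : Fin ℓ → ℝ} (hβ : β ∈ Φ) (hpos : ∀ i, 0 ≤ C β i) : 1 ≤ htC C β := by
  obtain ⟨i, hi⟩ := C_ne_zero hΦ hbase hβ
  have h1 : 1 ≤ C β i := by have := hpos i; omega
  calc (1:ℤ) ≤ C β i := h1
    _ ≤ ∑ j, C β j := Finset.single_le_sum (fun j _ => hpos j) (Finset.mem_univ i)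

lemma htC_neg_of_nonpos (hΦ : IsCrystalRootSystem Φ) (hbase : IsBase Φ Δ C)
    {β : Fin ℓ → ℝ} (hβ : β ∈ Φ) (hneg : ∀ i, C β i ≤ 0) : htC C β ≤ -1 := by
  obtain ⟨i, hi⟩ := C_ne_zero hΦ hbase hβ
  have h1 : C β i ≤ -1 := by have := hneg i; omega
  have key : -C β i ≤ ∑ j, -C β j := by
    simpa using Finset.single_le_sum (f := fun j => -C β j)
      (fun j _ => by simpa using hneg j) (Finset.mem_univ i)
  have h2 : ∑ j, -C β j = -∑ j, C β j := by simp
  unfold htC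
  omega

/-- expansion of the inner product of a root against anything -/
lemma rdot_root_expand (hbase : IsBase Φ Δ C) {β : Fin ℓ → ℝ} (hβ : β ∈ Φ)
    (v : Fin ℓ → ℝ) : rdot β v = ∑ i, (C β i : ℝ) * rdot (Δ i) v := by
  have h1 : β = ∑ i, (C β i : ℝ) • Δ i := (hbase.2.2 β hβ).1
  calc rdot β v = rdot (∑ i, (C β i : ℝ) • Δ i) v := by rw [← h1]
    _ = ∑ i, rdot ((C β i : ℝ) • Δ i) v := rdot_sum_left _ _
    _ = ∑ i, (C β i : ℝ) * rdot (Δ i) v := by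
        congr 1; funext i; rw [rdot_smul_left]

end Coeff



section Conn
variable {ℓ : ℕ} {Φ : Finset (Fin ℓ → ℝ)} {Δ : Fin ℓ → (Fin ℓ → ℝ)}
  {C : (Fin ℓ → ℝ) → Fin ℓ → ℤ}

lemma exists_pos_pair (hbase : IsBase Φ Δ C) {β : Fin ℓ → ℝ} (hβ : β ∈ Φ) (h0 : β ≠ 0)
    (hpos : ∀ i, 0 ≤ C β i) : ∃ i, 0 < C β i ∧ 0 < rdot β (Δ i) := by
  by_contra h
  push_neg at h
  have hq : rdot β β ≤ 0 := by
    rw [rdot_root_expand hbase hβ]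
    apply Finset.sum_nonpos
    intro i _
    rcases lt_or_eq_of_le (hpos i) with hlt | heq
    · have hd := h i hlt
      have hcomm : rdot (Δ i) β = rdot β (Δ i) := rdot_comm _ _
      have hc : (0:ℝ) ≤ (C β i : ℝ) := by exact_mod_cast (hpos i)
      nlinarith
    · rw [← heq]; simp
  linarith [rdot_self_pos h0]

lemma eq_simple_of_support (hΦ : IsCrystalRootSystem Φ) (hsl : IsEqualLengthRS Φ)
    (hbase : IsBase Φ Δ C) {β : Fin ℓ → ℝ} (hβ : β ∈ Φ) (i : Fin ℓ) (P : Fin ℓ → Prop)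
    (horth : ∀ j, ¬ P j → rdot (Δ i) (Δ j) = 0) (hCi : C β i = 1)
    (hz : ∀ j, P j → j ≠ i → C β j = 0) : β = Δ i := by
  have hr : rdot β (Δ i) = rdot (Δ i) (Δ i) := by
    rw [rdot_root_expand hbase hβ]
    rw [Finset.sum_eq_single i]
    · rw [hCi]; norm_num
    · intro j _ hji
      by_cases hPj : P j
      · rw [hz j hPj hji]; norm_num
      · rw [rdot_comm, horth j hPj]; ring
    · intro h; exact absurd (Finset.mem_univ i) h
  obtain ⟨k, _, hk, _, hk2, h2, _⟩ := exists_cartan hΦ hsl (hbase.1 i) hβ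
  have hN : 0 < rdot (Δ i) (Δ i) := rdot_self_pos (hΦ.nonzero _ (hbase.1 i))
  have hkr : (k:ℝ) = 2 := by
    rw [hr] at hk
    have := mul_right_cancel₀ (ne_of_gt hN) hk
    linarith
  exact h2 (by exact_mod_cast hkr)

lemma support_one_sided (hΦ : IsCrystalRootSystem Φ) (hsl : IsEqualLengthRS Φ)
    (hbase : IsBase Φ Δ C) (S : Finset (Fin ℓ))
    (horth : ∀ i ∈ S, ∀ j, j ∉ S → rdot (Δ i) (Δ j) = 0) :
    ∀ n : ℕ, ∀ β ∈ Φ, (∀ i, 0 ≤ C β i) → htC C β = (n:ℤ) →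
      (∀ j, j ∉ S → C β j = 0) ∨ (∀ i ∈ S, C β i = 0) := by
  intro n
  induction n using Nat.strong_induction_on with
  | _ n IH =>
  intro β hβ hpos hht
  by_contra hmix
  push_neg at hmix
  obtain ⟨⟨j0, hj0S, hj0⟩, ⟨i0, hi0S, hi0⟩⟩ := hmix
  have hj0' : 0 < C β j0 := lt_of_le_of_ne (hpos j0) (Ne.symm hj0)
  have hi0' : 0 < C β i0 := lt_of_le_of_ne (hpos i0) (Ne.symm hi0)
  have hne2 : i0 ≠ j0 := fun h => hj0S (h ▸ hi0S)
  obtain ⟨i, hCi, hri⟩ := exists_pos_pair hbase hβ (hΦ.nonzero β hβ) hpos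
  have hne : β ≠ Δ i := by
    intro h
    have hC := C_simple hbase i
    have e1 : C β i0 = if i0 = i then 1 else 0 := by rw [h, hC]
    have e2 : C β j0 = if j0 = i then 1 else 0 := by rw [h, hC]
    by_cases h1 : i0 = i
    · by_cases h2 : j0 = i
      · exact hne2 (h1.trans h2.symm)
      · rw [if_neg h2] at e2; omega
    · rw [if_neg h1] at e1; omega
  have hγmem : β - Δ i ∈ Φ := rs_sub_mem hΦ hsl (hbase.1 i) hβ hri hne
  have hE : β - ((1:ℤ):ℝ) • Δ i = β - Δ i := by norm_num
  have hγ' : β - ((1:ℤ):ℝ) • Δ i ∈ Φ := by rw [hE]; exact hγmem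
  have hCγ := C_sub_smul hbase hβ 1 i hγ'
  have hhtγ := htC_sub_smul hbase hβ 1 i hγ'
  set γ := β - ((1:ℤ):ℝ) • Δ i with hγdef
  have hγpos : ∀ j, 0 ≤ C γ j := by
    rcases (hbase.2.2 γ hγ').2 with hp | hn
    · exact hp
    · exfalso
      by_cases hii : i0 = i
      · have hj0i : j0 ≠ i := fun h => hne2 (hii.trans h.symm)
        have := hn j0
        rw [hCγ] at this
        simp only [if_neg hj0i] at this
        omega
      · have := hn i0
        rw [hCγ] at this
        simp only [if_neg hii] at this
        omega
  have hγht1 : 1 ≤ htC C γ := htC_pos_of_nonneg hΦ hbase hγ' hγpos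
  have hhtγn : htC C γ = (n:ℤ) - 1 := by rw [hhtγ, hht]
  have hn2 : 2 ≤ n := by omega
  have hmlt : n - 1 < n := by omega
  have hcast : htC C γ = ((n-1:ℕ):ℤ) := by push_cast; omega
  rcases IH (n-1) hmlt γ hγ' hγpos hcast with hl | hr
  · -- γ supported in S; derive i = j0 ∉ S, β = Δ i, contradiction
    have h0 := hl j0 hj0S
    rw [hCγ] at h0
    simp only at h0
    by_cases hji : j0 = i
    · subst hji
      rw [if_pos rfl] at h0
      have hCβ1 : C β j0 = 1 := by omega
      have : β = Δ j0 := by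
        apply eq_simple_of_support hΦ hsl hbase hβ j0 (fun j => j ∉ S)
        · intro j hj
          push_neg at hj
          rw [rdot_comm]
          exact horth j hj j0 hj0S
        · exact hCβ1
        · intro j hjS hjne
          have := hl j hjS
          rw [hCγ] at this
          simp only [if_neg hjne] at this
          omega
      exact hne this
    · rw [if_neg hji] at h0; omega
  · -- γ supported outside S; derive i = i0 ∈ S, β = Δ i, contradiction
    have h0 := hr i0 hi0S
    rw [hCγ] at h0
    simp only at h0
    by_cases hii : i0 = i
    · subst hii
      rw [if_pos rfl] at h0
      have hCβ1 : C β i0 = 1 := by omega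
      have : β = Δ i0 := by
        apply eq_simple_of_support hΦ hsl hbase hβ i0 (fun j => j ∈ S)
        · intro j hj
          exact horth i0 hi0S j hj
        · exact hCβ1
        · intro j hjS hjne
          have := hr j hjS
          rw [hCγ] at this
          simp only [if_neg hjne] at this
          omega
      exact hne this
    · rw [if_neg hii] at h0; omega

/-- A root is supported in `S` or in its complement. -/
lemma support_one_sided' (hΦ : IsCrystalRootSystem Φ) (hsl : IsEqualLengthRS Φ)
    (hbase : IsBase Φ Δ C) (S : Finset (Fin ℓ))
    (horth : ∀ i ∈ S, ∀ j, j ∉ S → rdot (Δ i) (Δ j) = 0)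
    {β : Fin ℓ → ℝ} (hβ : β ∈ Φ) :
    (∀ j, j ∉ S → C β j = 0) ∨ (∀ i ∈ S, C β i = 0) := by
  rcases (hbase.2.2 β hβ).2 with hp | hn
  · have h1 : 1 ≤ htC C β := htC_pos_of_nonneg hΦ hbase hβ hp
    have hcast : htC C β = (((htC C β).toNat : ℕ) : ℤ) := by omega
    exact support_one_sided hΦ hsl hbase S horth (htC C β).toNat β hβ hp hcast
  · have hnβ : -β ∈ Φ := rs_neg_mem hΦ hβ
    have hCn : C (-β) = -C β := C_neg hΦ hbase hβ hnβ
    have hp' : ∀ i, 0 ≤ C (-β) i := by intro i; rw [hCn]; simpa using hn i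
    have h1 : 1 ≤ htC C (-β) := htC_pos_of_nonneg hΦ hbase hnβ hp'
    have hcast : htC C (-β) = (((htC C (-β)).toNat : ℕ) : ℤ) := by omega
    rcases support_one_sided hΦ hsl hbase S horth (htC C (-β)).toNat (-β) hnβ hp' hcast with hl | hr
    · left; intro j hj; have := hl j hj; rw [hCn] at this; simpa using this
    · right; intro i hi; have := hr i hi; rw [hCn] at this; simpa using this

/-- Connectedness of the Dynkin diagram, from irreducibility of `Φ`. -/
lemma dynkin_connected (hΦ : IsCrystalRootSystem Φ) (hirr : IsIrreducibleRS Φ)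
    (hsl : IsEqualLengthRS Φ) (hbase : IsBase Φ Δ C) (S : Finset (Fin ℓ))
    (horth : ∀ i ∈ S, ∀ j, j ∉ S → rdot (Δ i) (Δ j) = 0) :
    S = ∅ ∨ S = Finset.univ := by
  classical
  by_cases hS : S = ∅
  · exact Or.inl hS
  right
  obtain ⟨i1, hi1⟩ := Finset.nonempty_iff_ne_empty.mpr hS
  set A : Finset (Fin ℓ → ℝ) := Φ.filter (fun β => ∀ j, j ∉ S → C β j = 0) with hA
  have hAsub : A ⊆ Φ := Finset.filter_subset _ _
  have hAorth : ∀ a ∈ A, ∀ b ∈ Φ, b ∉ A → rdot a b = 0 := by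
    intro a ha b hb hbA
    have haΦ : a ∈ Φ := hAsub ha
    have haS : ∀ j, j ∉ S → C a j = 0 := (Finset.mem_filter.mp ha).2
    have hbS : ∀ i ∈ S, C b i = 0 := by
      rcases support_one_sided' hΦ hsl hbase S horth hb with hl | hr
      · exact absurd (Finset.mem_filter.mpr ⟨hb, hl⟩) hbA
      · exact hr
    rw [rdot_root_expand hbase haΦ]
    apply Finset.sum_eq_zero
    intro i _
    by_cases hiS : i ∈ S
    · have : rdot (Δ i) b = 0 := by
        rw [rdot_comm, rdot_root_expand hbase hb]
        apply Finset.sum_eq_zero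
        intro j _
        by_cases hjS : j ∈ S
        · rw [hbS j hjS]; norm_num
        · rw [rdot_comm, horth i hiS j hjS]; ring
      rw [this]; ring
    · rw [haS i hiS]; norm_num
  rcases hirr A hAsub hAorth with hA0 | hAΦ
  · exfalso
    have : Δ i1 ∈ A := by
      apply Finset.mem_filter.mpr
      refine ⟨hbase.1 i1, ?_⟩
      intro j hj
      rw [C_simple hbase i1]
      have : j ≠ i1 := fun h => hj (h ▸ hi1)
      simp [this]
    rw [hA0] at this
    exact absurd this (Finset.notMem_empty _)
  · by_contra hSuniv
    obtain ⟨j1, hj1⟩ : ∃ j, j ∉ S := by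
      by_contra h
      push_neg at h
      exact hSuniv (Finset.eq_univ_iff_forall.mpr h)
    have : Δ j1 ∈ A := hAΦ ▸ hbase.1 j1
    have hcontra := (Finset.mem_filter.mp this).2 j1 hj1
    rw [C_simple hbase j1] at hcontra
    simp at hcontra

end Conn


section Highest
variable {ℓ : ℕ} {Φ : Finset (Fin ℓ → ℝ)} {Δ : Fin ℓ → (Fin ℓ → ℝ)}
  {C : (Fin ℓ → ℝ) → Fin ℓ → ℤ}

lemma C_sub_root (hbase : IsBase Φ Δ C) {a b : Fin ℓ → ℝ} (ha : a ∈ Φ) (hb : b ∈ Φ)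
    (hab : a - b ∈ Φ) : C (a - b) = C a - C b := by
  apply C_eq_of hbase hab
  have h1 : a = ∑ i, (C a i : ℝ) • Δ i := (hbase.2.2 a ha).1
  have h2 : b = ∑ i, (C b i : ℝ) • Δ i := (hbase.2.2 b hb).1
  rw [show a - b = (∑ i, (C a i : ℝ) • Δ i) - ∑ i, (C b i : ℝ) • Δ i from by rw [← h1, ← h2]]
  rw [← Finset.sum_sub_distrib]
  congr 1; funext i
  rw [← sub_smul]
  congr 1
  push_cast
  simp

lemma simple_rdot_nonpos (hΦ : IsCrystalRootSystem Φ) (hsl : IsEqualLengthRS Φ)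
    (hbase : IsBase Φ Δ C) {i j : Fin ℓ} (hij : i ≠ j) : rdot (Δ i) (Δ j) ≤ 0 := by
  by_contra h
  push_neg at h
  have hnej : Δ i ≠ Δ j := fun hEq => hij (hbase.2.1.injective hEq)
  have hρ : Δ i - Δ j ∈ Φ := rs_sub_mem hΦ hsl (hbase.1 j) (hbase.1 i) h hnej
  have hE : Δ i - ((1:ℤ):ℝ) • Δ j = Δ i - Δ j := by norm_num
  have hρ' : Δ i - ((1:ℤ):ℝ) • Δ j ∈ Φ := by rw [hE]; exact hρ
  have hC := C_sub_smul hbase (hbase.1 i) 1 j hρ'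
  have hCi : C (Δ i - ((1:ℤ):ℝ) • Δ j) i = 1 := by
    rw [hC]; simp [C_simple hbase i, hij]
  have hCj : C (Δ i - ((1:ℤ):ℝ) • Δ j) j = -1 := by
    rw [hC]; simp [C_simple hbase i, Ne.symm hij]
  rcases (hbase.2.2 _ hρ').2 with hp | hn
  · have := hp j; omega
  · have := hn i; omega

variable {α₀ : Fin ℓ → ℝ}

lemma alpha0_nonneg (hΦ : IsCrystalRootSystem Φ) (hbase : IsBase Φ Δ C)
    (hα₀ : α₀ ∈ Φ) (hhighest : ∀ β ∈ Φ, htC C β ≤ htC C α₀) : ∀ i, 0 ≤ C α₀ i := by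
  have hnα₀ : -α₀ ∈ Φ := rs_neg_mem hΦ hα₀
  have h1 : htC C (-α₀) = -htC C α₀ := htC_neg hΦ hbase hα₀ hnα₀
  have h2 : htC C (-α₀) ≤ htC C α₀ := hhighest _ hnα₀
  rcases (hbase.2.2 α₀ hα₀).2 with hp | hn
  · exact hp
  · exfalso
    have := htC_neg_of_nonpos hΦ hbase hα₀ hn
    omega

lemma alpha0_dominant (hΦ : IsCrystalRootSystem Φ) (hsl : IsEqualLengthRS Φ)
    (hbase : IsBase Φ Δ C) (hα₀ : α₀ ∈ Φ) (hhighest : ∀ β ∈ Φ, htC C β ≤ htC C α₀) :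
    ∀ i, 0 ≤ rdot α₀ (Δ i) := by
  intro i
  by_contra h
  push_neg at h
  have hpos := alpha0_nonneg hΦ hbase hα₀ hhighest
  have hne : α₀ ≠ -Δ i := by
    intro hEq
    have : C α₀ i = -1 := by
      rw [hEq, C_neg hΦ hbase (hbase.1 i) (rs_neg_mem hΦ (hbase.1 i)), C_simple hbase i]
      simp
    have := hpos i
    omega
  have hmem : α₀ + Δ i ∈ Φ := rs_add_mem hΦ hsl (hbase.1 i) hα₀ h hne
  have hE : α₀ - ((-1:ℤ):ℝ) • Δ i = α₀ + Δ i := by funext j; simp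
  have hmem' : α₀ - ((-1:ℤ):ℝ) • Δ i ∈ Φ := by rw [hE]; exact hmem
  have := htC_sub_smul hbase hα₀ (-1) i hmem'
  have hle := hhighest _ hmem'
  omega

lemma alpha0_full_support (hΦ : IsCrystalRootSystem Φ) (hirr : IsIrreducibleRS Φ)
    (hsl : IsEqualLengthRS Φ) (hbase : IsBase Φ Δ C) (hα₀ : α₀ ∈ Φ)
    (hhighest : ∀ β ∈ Φ, htC C β ≤ htC C α₀) : ∀ i, 1 ≤ C α₀ i := by
  classical
  have hpos := alpha0_nonneg hΦ hbase hα₀ hhighest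
  have hdom := alpha0_dominant hΦ hsl hbase hα₀ hhighest
  set S : Finset (Fin ℓ) := Finset.univ.filter (fun i => 0 < C α₀ i) with hS
  have hmemS : ∀ i, i ∈ S ↔ 0 < C α₀ i := by
    intro i; simp [hS]
  have horth : ∀ i ∈ S, ∀ j, j ∉ S → rdot (Δ i) (Δ j) = 0 := by
    intro i hiS j hjS
    have hCj : C α₀ j = 0 := by
      have := (hmemS j).not.mp hjS
      have := hpos j
      omega
    have hij : i ≠ j := by
      intro hEq
      rw [hEq, hmemS j] at hiS
      omega
    have hsum : (∑ m, (C α₀ m : ℝ) * rdot (Δ m) (Δ j)) = 0 := by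
      have hle : (∑ m, (C α₀ m : ℝ) * rdot (Δ m) (Δ j)) ≤ 0 := by
        apply Finset.sum_nonpos
        intro m _
        by_cases hmj : m = j
        · subst hmj
          rw [show ((C α₀ m : ℝ)) = 0 from by exact_mod_cast hCj]
          ring_nf
          exact le_of_eq rfl
        · have h1 : (0:ℝ) ≤ (C α₀ m : ℝ) := by exact_mod_cast hpos m
          have h2 := simple_rdot_nonpos hΦ hsl hbase hmj
          exact mul_nonpos_of_nonneg_of_nonpos h1 h2
      have hge : (0:ℝ) ≤ (∑ m, (C α₀ m : ℝ) * rdot (Δ m) (Δ j)) := by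
        rw [← rdot_root_expand hbase hα₀]
        exact hdom j
      linarith
    have heach := (Finset.sum_eq_zero_iff_of_nonpos ?_).mp hsum i (Finset.mem_univ i)
    · have hCi : (0:ℝ) < (C α₀ i : ℝ) := by exact_mod_cast (hmemS i).mp hiS
      rcases mul_eq_zero.mp heach with h | h
      · exfalso; exact (ne_of_gt hCi) h
      · exact h
    · intro m _
      by_cases hmj : m = j
      · subst hmj
        rw [show ((C α₀ m : ℝ)) = 0 from by exact_mod_cast hCj]
        ring_nf
        exact le_of_eq rfl
      · have h1 : (0:ℝ) ≤ (C α₀ m : ℝ) := by exact_mod_cast hpos m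
        have h2 := simple_rdot_nonpos hΦ hsl hbase hmj
        exact mul_nonpos_of_nonneg_of_nonpos h1 h2
  rcases dynkin_connected hΦ hirr hsl hbase S horth with h0 | huniv
  · exfalso
    obtain ⟨i, hi⟩ := C_ne_zero hΦ hbase hα₀
    have : i ∈ S := (hmemS i).mpr (by have := hpos i; omega)
    rw [h0] at this
    exact absurd this (Finset.notMem_empty _)
  · intro i
    have : i ∈ S := huniv ▸ Finset.mem_univ i
    have := (hmemS i).mp this
    omega

/-- A dominant positive root must be the highest root. -/
lemma dominant_eq_highest (hΦ : IsCrystalRootSystem Φ) (hirr : IsIrreducibleRS Φ)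
    (hsl : IsEqualLengthRS Φ) (hbase : IsBase Φ Δ C) (hα₀ : α₀ ∈ Φ)
    (hhighest : ∀ β ∈ Φ, htC C β ≤ htC C α₀) {α : Fin ℓ → ℝ} (hα : α ∈ Φ)
    (hpos : ∀ i, 0 ≤ C α i) (hdom : ∀ i, 0 ≤ rdot α (Δ i)) : α = α₀ := by
  by_cases hEq : α₀ = α
  · exact hEq.symm
  obtain ⟨i, hCi, hri⟩ := exists_pos_pair hbase hα (hΦ.nonzero α hα) hpos
  have hfull := alpha0_full_support hΦ hirr hsl hbase hα₀ hhighest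
  -- rdot α₀ α > 0
  have hr0 : 0 < rdot α₀ α := by
    rw [rdot_root_expand hbase hα₀]
    apply Finset.sum_pos'
    · intro m _
      have h1 : (0:ℝ) ≤ (C α₀ m : ℝ) := by exact_mod_cast le_of_lt (by have := hfull m; omega : (0:ℤ) < C α₀ m)
      have h2 : 0 ≤ rdot (Δ m) α := by rw [rdot_comm]; exact hdom m
      exact mul_nonneg h1 h2
    · refine ⟨i, Finset.mem_univ i, ?_⟩
      have h1 : (0:ℝ) < (C α₀ i : ℝ) := by exact_mod_cast (by have := hfull i; omega : (0:ℤ) < C α₀ i)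
      have h2 : 0 < rdot (Δ i) α := by rw [rdot_comm]; exact hri
      exact mul_pos h1 h2
  have hδ : α₀ - α ∈ Φ := rs_sub_mem hΦ hsl hα hα₀ hr0 hEq
  -- rdot α (α₀ - α) < 0
  have hrneg : rdot α (α₀ - α) < 0 := by
    obtain ⟨k, _, hk, _, hk2, h2, _⟩ := exists_cartan hΦ hsl hα hα₀
    have hkne2 : k ≠ 2 := fun h => hEq (h2 h)
    have hk1 : k ≤ 1 := by omega
    have hN : 0 < rdot α α := rdot_self_pos (hΦ.nonzero α hα)
    have hk1r : (k:ℝ) ≤ 1 := by exact_mod_cast hk1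
    rw [rdot_sub_right]
    have hcomm : rdot α α₀ = rdot α₀ α := rdot_comm _ _
    nlinarith
  rcases (hbase.2.2 _ hδ).2 with hp | hn
  · exfalso
    have : 0 ≤ rdot (α₀ - α) α := by
      rw [rdot_root_expand hbase hδ]
      apply Finset.sum_nonneg
      intro m _
      have h1 : (0:ℝ) ≤ (C (α₀ - α) m : ℝ) := by exact_mod_cast hp m
      have h2 : 0 ≤ rdot (Δ m) α := by rw [rdot_comm]; exact hdom m
      exact mul_nonneg h1 h2
    rw [rdot_comm] at this
    linarith
  · exfalso
    have hCδ : C (α₀ - α) = C α₀ - C α := C_sub_root hbase hα₀ hα hδ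
    have hht : htC C (α₀ - α) = htC C α₀ - htC C α := by
      unfold htC
      rw [hCδ]
      simp [Finset.sum_sub_distrib]
    have h1 := htC_neg_of_nonpos hΦ hbase hδ hn
    have h2 := hhighest α hα
    omega

end Highest


section Words
variable {ℓ : ℕ} {Φ : Finset (Fin ℓ → ℝ)} {Δ : Fin ℓ → (Fin ℓ → ℝ)}
  {C : (Fin ℓ → ℝ) → Fin ℓ → ℤ}

lemma rrefl_invol {α v : Fin ℓ → ℝ} (h : rdot α α ≠ 0) : rrefl α (rrefl α v) = v := by
  unfold rrefl
  rw [rdot_sub_left, rdot_smul_left]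
  funext i
  simp only [Pi.sub_apply, Pi.smul_apply, smul_eq_mul]
  field_simp
  ring

lemma rrefl_self {α : Fin ℓ → ℝ} (h : α ≠ 0) : rrefl α α = -α := by
  have hN : rdot α α ≠ 0 := ne_of_gt (rdot_self_pos h)
  unfold rrefl
  funext i
  simp only [Pi.sub_apply, Pi.smul_apply, smul_eq_mul, Pi.neg_apply]
  field_simp
  ring

lemma rrefl_eq_add_of_neg (hΦ : IsCrystalRootSystem Φ) (hsl : IsEqualLengthRS Φ)
    {a b : Fin ℓ → ℝ} (ha : a ∈ Φ) (hb : b ∈ Φ) (hneg : rdot b a < 0) (hne : b ≠ -a) :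
    rrefl a b = b + a := by
  obtain ⟨k, hrefl, hk, hkm2, hk2, h2, hm2⟩ := exists_cartan hΦ hsl ha hb
  have hN : 0 < rdot a a := rdot_self_pos (hΦ.nonzero a ha)
  have hklt : k < 0 := by
    by_contra h
    push_neg at h
    have : (0:ℝ) ≤ (k:ℝ) := by exact_mod_cast h
    nlinarith
  have hkne : k ≠ -2 := fun h => hne (hm2 h)
  have hkeq : k = -1 := by omega
  rw [hrefl, hkeq]
  funext i; simp

open Classical in
/-- Modified height: `ht β` for a positive root, `ht β + 1` for a negative one. -/
noncomputable def modHt (C : (Fin ℓ → ℝ) → Fin ℓ → ℤ) (β : Fin ℓ → ℝ) : ℤ :=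
  if (∀ i, 0 ≤ C β i) then htC C β else htC C β + 1

lemma modHt_pos {β : Fin ℓ → ℝ} (hp : ∀ i, 0 ≤ C β i) : modHt C β = htC C β := by
  rw [modHt, if_pos hp]

lemma modHt_neg (hΦ : IsCrystalRootSystem Φ) (hbase : IsBase Φ Δ C) {β : Fin ℓ → ℝ}
    (hβ : β ∈ Φ) (hn : ∀ i, C β i ≤ 0) : modHt C β = htC C β + 1 := by
  obtain ⟨i, hi⟩ := C_ne_zero hΦ hbase hβ
  rw [modHt, if_neg]
  intro h
  have := h i
  have := hn i
  omega

lemma modHt_neg_eq (hΦ : IsCrystalRootSystem Φ) (hbase : IsBase Φ Δ C) {β : Fin ℓ → ℝ}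
    (hβ : β ∈ Φ) : modHt C (-β) = 1 - modHt C β := by
  have hnβ : -β ∈ Φ := rs_neg_mem hΦ hβ
  have hC : C (-β) = -C β := C_neg hΦ hbase hβ hnβ
  have hht : htC C (-β) = -htC C β := htC_neg hΦ hbase hβ hnβ
  rcases (hbase.2.2 β hβ).2 with hp | hn
  · have hn' : ∀ i, C (-β) i ≤ 0 := by intro i; rw [hC]; simpa using hp i
    rw [modHt_neg hΦ hbase hnβ hn', modHt_pos hp, hht]
    ring
  · have hp' : ∀ i, 0 ≤ C (-β) i := by intro i; rw [hC]; simpa using hn i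
    rw [modHt_pos hp', modHt_neg hΦ hbase hβ hn, hht]
    ring

/-- The single-reflection step changes the modified height by at most 1
(positive-root case). -/
lemma modHt_step_pos (hΦ : IsCrystalRootSystem Φ) (hsl : IsEqualLengthRS Φ)
    (hbase : IsBase Φ Δ C) {β : Fin ℓ → ℝ} (hβ : β ∈ Φ) (hp : ∀ i, 0 ≤ C β i)
    (i : Fin ℓ) : |modHt C (rrefl (Δ i) β) - modHt C β| ≤ 1 := by
  obtain ⟨k, hrefl, hk, hkm2, hk2, h2, hm2⟩ := exists_cartan hΦ hsl (hbase.1 i) hβ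
  have hkm1 : -1 ≤ k := by
    by_contra h
    have hkeq : k = -2 := by omega
    have hβeq := hm2 hkeq
    have : C β i = -1 := by
      rw [hβeq, C_neg hΦ hbase (hbase.1 i) (rs_neg_mem hΦ (hbase.1 i)), C_simple hbase i]
      simp
    have := hp i
    omega
  by_cases hk2' : k = 2
  · -- β = Δ i, reflection sends it to -Δ i
    have hβeq := h2 hk2'
    subst hβeq
    have hrefl2 : rrefl (Δ i) (Δ i) = -Δ i := rrefl_self (hΦ.nonzero _ (hbase.1 i))
    rw [hrefl2, modHt_neg_eq hΦ hbase (hbase.1 i), modHt_pos hp, htC_simple hbase i]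
    norm_num
  · -- |k| ≤ 1
    have hmem : β - ((k:ℤ):ℝ) • Δ i ∈ Φ := by
      rw [← hrefl]; exact hΦ.stable _ (hbase.1 i) β hβ
    have hC := C_sub_smul hbase hβ k i hmem
    have hht := htC_sub_smul hbase hβ k i hmem
    rw [hrefl]
    rcases (hbase.2.2 _ hmem).2 with hγp | hγn
    · rw [modHt_pos hγp, modHt_pos hp, hht]
      rw [abs_le]
      omega
    · -- then htC changes by k and modHt by k - 1 ∈ {-2, -1, 0}... need k ≥ ... careful
      -- γ negative: C γ j = C β j - ite ≤ 0 forces C β j = 0 for j ≠ i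
      have hCβ : ∀ j, j ≠ i → C β j = 0 := by
        intro j hj
        have := hγn j
        rw [hC] at this
        simp only [if_neg hj] at this
        have := hp j
        omega
      -- so β = (C β i) • Δ i hence C β i = 1, β = Δ i, k = 2, contradiction unless k = 1, 0, -1:
      -- If k ≤ 0 then C γ i ≥ C β i ≥ 0 so C γ i = 0 and all C γ = 0: impossible.
      have hkpos : k = 1 := by
        rcases lt_or_ge k 1 with h | h
        · exfalso
          have h1 : C (β - ((k:ℤ):ℝ) • Δ i) i = C β i - k := by rw [hC]; simp
          have h2' := hγn i
          have h3 : 0 ≤ C β i := hp i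
          -- k ≤ 0 so C γ i = C β i - k ≥ 0, hence = 0; other coords zero too
          obtain ⟨j, hj⟩ := C_ne_zero hΦ hbase hmem
          by_cases hji : j = i
          · subst hji; omega
          · have := hγn j
            rw [hC] at hj this
            simp only [if_neg hji] at hj this
            have := hp j
            omega
        · omega
      subst hkpos
      rw [modHt_neg hΦ hbase hmem hγn, modHt_pos hp, hht]
      rw [abs_le]
      omega

lemma modHt_step (hΦ : IsCrystalRootSystem Φ) (hsl : IsEqualLengthRS Φ)
    (hbase : IsBase Φ Δ C) {β : Fin ℓ → ℝ} (hβ : β ∈ Φ) (i : Fin ℓ) :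
    |modHt C (rrefl (Δ i) β) - modHt C β| ≤ 1 := by
  rcases (hbase.2.2 β hβ).2 with hp | hn
  · exact modHt_step_pos hΦ hsl hbase hβ hp i
  · have hnβ : -β ∈ Φ := rs_neg_mem hΦ hβ
    have hp' : ∀ j, 0 ≤ C (-β) j := by
      intro j; rw [C_neg hΦ hbase hβ hnβ]; simpa using hn j
    have hstep := modHt_step_pos hΦ hsl hbase hnβ hp' i
    have hre : rrefl (Δ i) (-β) = -(rrefl (Δ i) β) := rrefl_neg _ _
    rw [hre] at hstep
    have hrmem : rrefl (Δ i) β ∈ Φ := hΦ.stable _ (hbase.1 i) β hβ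
    rw [modHt_neg_eq hΦ hbase hrmem, modHt_neg_eq hΦ hbase hβ] at hstep
    rw [show (1 - modHt C (rrefl (Δ i) β)) - (1 - modHt C β)
        = -(modHt C (rrefl (Δ i) β) - modHt C β) from by ring, abs_neg] at hstep
    exact hstep

lemma applyWord_nil (v : Fin ℓ → ℝ) : applyWord Δ [] v = v := rfl

lemma applyWord_cons (i : Fin ℓ) (w : List (Fin ℓ)) (v : Fin ℓ → ℝ) :
    applyWord Δ (i :: w) v = rrefl (Δ i) (applyWord Δ w v) := rfl

lemma applyWord_mem (hΦ : IsCrystalRootSystem Φ) (hbase : IsBase Φ Δ C)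
    (w : List (Fin ℓ)) {v : Fin ℓ → ℝ} (hv : v ∈ Φ) : applyWord Δ w v ∈ Φ := by
  induction w with
  | nil => exact hv
  | cons i w ih => exact hΦ.stable _ (hbase.1 i) _ ih

lemma modHt_word_bound (hΦ : IsCrystalRootSystem Φ) (hsl : IsEqualLengthRS Φ)
    (hbase : IsBase Φ Δ C) {v : Fin ℓ → ℝ} (hv : v ∈ Φ) (w : List (Fin ℓ)) :
    |modHt C (applyWord Δ w v) - modHt C v| ≤ (w.length : ℤ) := by
  induction w with
  | nil => simp [applyWord_nil]
  | cons i w ih =>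
    have hmem : applyWord Δ w v ∈ Φ := applyWord_mem hΦ hbase w hv
    have hstep := modHt_step hΦ hsl hbase hmem i
    rw [applyWord_cons]
    calc |modHt C (rrefl (Δ i) (applyWord Δ w v)) - modHt C v|
        ≤ |modHt C (rrefl (Δ i) (applyWord Δ w v)) - modHt C (applyWord Δ w v)|
          + |modHt C (applyWord Δ w v) - modHt C v| := abs_sub_le _ _ _
      _ ≤ 1 + (w.length : ℤ) := add_le_add hstep ih
      _ = ((i :: w).length : ℤ) := by simp; ring

end Words


section Construct
variable {ℓ : ℕ} {Φ : Finset (Fin ℓ → ℝ)} {Δ : Fin ℓ → (Fin ℓ → ℝ)}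
  {C : (Fin ℓ → ℝ) → Fin ℓ → ℤ} {α₀ : Fin ℓ → ℝ}

/-- Upper bound: a word of length `ht α₀ - ht α` carrying `α₀` to a positive root `α`. -/
lemma word_to_pos (hΦ : IsCrystalRootSystem Φ) (hirr : IsIrreducibleRS Φ)
    (hsl : IsEqualLengthRS Φ) (hbase : IsBase Φ Δ C) (hα₀ : α₀ ∈ Φ)
    (hhighest : ∀ β ∈ Φ, htC C β ≤ htC C α₀) :
    ∀ n : ℕ, ∀ α, α ∈ Φ → (∀ i, 0 ≤ C α i) → (htC C α₀ - htC C α).toNat = n →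
      ∃ w : List (Fin ℓ), w.length = n ∧ applyWord Δ w α₀ = α := by
  intro n
  induction n using Nat.strong_induction_on with
  | _ n IH =>
  intro α hα hpos hht
  by_cases hdom : ∀ i, 0 ≤ rdot α (Δ i)
  · have hEq : α = α₀ := dominant_eq_highest hΦ hirr hsl hbase hα₀ hhighest hα hpos hdom
    subst hEq
    refine ⟨[], ?_, applyWord_nil α⟩
    simp only [List.length_nil]
    simp at hht
    omega
  · push_neg at hdom
    obtain ⟨i, hri⟩ := hdom
    have hne : α ≠ -Δ i := by
      intro hEq
      have : C α i = -1 := by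
        rw [hEq, C_neg hΦ hbase (hbase.1 i) (rs_neg_mem hΦ (hbase.1 i)), C_simple hbase i]
        simp
      have := hpos i
      omega
    have hγeq : rrefl (Δ i) α = α + Δ i := rrefl_eq_add_of_neg hΦ hsl (hbase.1 i) hα hri hne
    have hγmem : α + Δ i ∈ Φ := by
      rw [← hγeq]; exact hΦ.stable _ (hbase.1 i) α hα
    have hE : α - ((-1:ℤ):ℝ) • Δ i = α + Δ i := by funext j; simp
    have hγ' : α - ((-1:ℤ):ℝ) • Δ i ∈ Φ := by rw [hE]; exact hγmem
    have hCγ := C_sub_smul hbase hα (-1) i hγ'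
    have hhtγ := htC_sub_smul hbase hα (-1) i hγ'
    have hγpos : ∀ j, 0 ≤ C (α - ((-1:ℤ):ℝ) • Δ i) j := by
      intro j
      rw [hCγ]
      simp only
      have h1 := hpos j
      have h2 := hpos i
      by_cases hji : j = i
      · subst hji; simp; omega
      · simp [hji]; omega
    have hle := hhighest _ hγ'
    have hn1 : 1 ≤ n := by omega
    have hmlt : n - 1 < n := by omega
    have hht' : (htC C α₀ - htC C (α - ((-1:ℤ):ℝ) • Δ i)).toNat = n - 1 := by omega
    obtain ⟨w, hw, happ⟩ := IH (n-1) hmlt _ hγ' hγpos hht'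
    refine ⟨i :: w, ?_, ?_⟩
    · simp [hw]; omega
    · rw [applyWord_cons, happ, hE, ← hγeq]
      exact rrefl_invol (ne_of_gt (rdot_self_pos (hΦ.nonzero _ (hbase.1 i))))

/-- Upper bound: a word of length `ht α₀ - ht α - 1` carrying `α₀` to a negative root. -/
lemma word_to_neg (hΦ : IsCrystalRootSystem Φ) (hirr : IsIrreducibleRS Φ)
    (hsl : IsEqualLengthRS Φ) (hbase : IsBase Φ Δ C) (hα₀ : α₀ ∈ Φ)
    (hhighest : ∀ β ∈ Φ, htC C β ≤ htC C α₀) :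
    ∀ n : ℕ, ∀ α, α ∈ Φ → (∀ i, C α i ≤ 0) → (-htC C α).toNat = n →
      ∃ w : List (Fin ℓ), (w.length : ℤ) = htC C α₀ - htC C α - 1 ∧ applyWord Δ w α₀ = α := by
  intro n
  induction n using Nat.strong_induction_on with
  | _ n IH =>
  intro α hα hneg hht
  have hht1 : htC C α ≤ -1 := htC_neg_of_nonpos hΦ hbase hα hneg
  by_cases hm1 : htC C α = -1
  · -- α = -Δ j for some j
    obtain ⟨j, hj⟩ := C_ne_zero hΦ hbase hα
    have hCj : C α j = -1 ∧ ∀ m, m ≠ j → C α m = 0 := by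
      have hsplit : ∑ m, C α m = C α j + ∑ m ∈ Finset.univ.erase j, C α m := by
        rw [← Finset.sum_erase_add Finset.univ _ (Finset.mem_univ j)]
        ring
      have hrest : ∑ m ∈ Finset.univ.erase j, C α m ≤ 0 :=
        Finset.sum_nonpos (fun m _ => hneg m)
      have hCj1 : C α j = -1 := by
        have := hneg j
        unfold htC at hm1
        omega
      have hrest0 : ∑ m ∈ Finset.univ.erase j, C α m = 0 := by
        unfold htC at hm1
        omega
      refine ⟨hCj1, fun m hm => ?_⟩
      exact (Finset.sum_eq_zero_iff_of_nonpos (fun m' _ => hneg m')).mp hrest0 m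
        (Finset.mem_erase.mpr ⟨hm, Finset.mem_univ m⟩)
    have hαeq : α = -Δ j := by
      have h1 : α = ∑ m, (C α m : ℝ) • Δ m := (hbase.2.2 α hα).1
      rw [h1, Finset.sum_eq_single j]
      · rw [hCj.1]; funext x; simp
      · intro m _ hm; rw [hCj.2 m hm]; simp
      · intro h; exact absurd (Finset.mem_univ j) h
    -- word to Δ j then reflect
    have hhtα₀ : 1 ≤ htC C α₀ := by
      have := hhighest (Δ j) (hbase.1 j)
      rw [htC_simple hbase j] at this
      omega
    have hsimple_pos : ∀ i, 0 ≤ C (Δ j) i := by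
      intro i; rw [C_simple hbase j]; by_cases h : i = j <;> simp [h]
    have hhtj : (htC C α₀ - htC C (Δ j)).toNat = (htC C α₀ - 1).toNat := by
      rw [htC_simple hbase j]
    obtain ⟨w1, hl1, ha1⟩ := word_to_pos hΦ hirr hsl hbase hα₀ hhighest
      (htC C α₀ - 1).toNat (Δ j) (hbase.1 j) hsimple_pos hhtj
    refine ⟨j :: w1, ?_, ?_⟩
    · simp [hl1]
      omega
    · rw [applyWord_cons, ha1, rrefl_self (hΦ.nonzero _ (hbase.1 j)), hαeq]
  · -- ht α ≤ -2
    have hht2 : htC C α ≤ -2 := by omega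
    have hnα : -α ∈ Φ := rs_neg_mem hΦ hα
    have hCn : C (-α) = -C α := C_neg hΦ hbase hα hnα
    have hp' : ∀ i, 0 ≤ C (-α) i := by intro i; rw [hCn]; simpa using hneg i
    obtain ⟨i, hCi, hri⟩ := exists_pos_pair hbase hnα (hΦ.nonzero _ hnα) hp'
    have hri' : rdot α (Δ i) < 0 := by
      have := rdot_neg_left α (Δ i)
      rw [rdot_neg_left] at hri
      linarith
    have hne : α ≠ -Δ i := by
      intro hEq
      have : htC C α = -1 := by
        rw [hEq, htC_neg hΦ hbase (hbase.1 i) (rs_neg_mem hΦ (hbase.1 i)), htC_simple hbase i]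
      omega
    have hγeq : rrefl (Δ i) α = α + Δ i := rrefl_eq_add_of_neg hΦ hsl (hbase.1 i) hα hri' hne
    have hγmem : α + Δ i ∈ Φ := by
      rw [← hγeq]; exact hΦ.stable _ (hbase.1 i) α hα
    have hE : α - ((-1:ℤ):ℝ) • Δ i = α + Δ i := by funext x; simp
    have hγ' : α - ((-1:ℤ):ℝ) • Δ i ∈ Φ := by rw [hE]; exact hγmem
    have hCγ := C_sub_smul hbase hα (-1) i hγ'
    have hhtγ := htC_sub_smul hbase hα (-1) i hγ'
    have hγneg : ∀ j, C (α - ((-1:ℤ):ℝ) • Δ i) j ≤ 0 := by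
      rcases (hbase.2.2 _ hγ').2 with hp | hn
      · exfalso
        -- all coords of α except i vanish, so ht α = C α i ≥ -1, contradiction
        have hz : ∀ j, j ≠ i → C α j = 0 := by
          intro j hj
          have := hp j
          rw [hCγ] at this
          simp only [if_neg hj] at this
          have := hneg j
          omega
        have : htC C α = C α i := by
          unfold htC
          rw [Finset.sum_eq_single i]
          · intro m _ hm; exact hz m hm
          · intro h; exact absurd (Finset.mem_univ i) h
        have hCαi := hp i
        rw [hCγ] at hCαi
        simp only [if_pos rfl] at hCαi
        omega
      · exact hn
    have hn1 : 1 ≤ n := by omega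
    have hmlt : n - 1 < n := by omega
    have hht' : (-htC C (α - ((-1:ℤ):ℝ) • Δ i)).toNat = n - 1 := by omega
    obtain ⟨w, hw, happ⟩ := IH (n-1) hmlt _ hγ' hγneg hht'
    refine ⟨i :: w, ?_, ?_⟩
    · simp only [List.length_cons]
      push_cast
      rw [hhtγ] at hw
      push_cast at hw
      omega
    · rw [applyWord_cons, happ, hE, ← hγeq]
      exact rrefl_invol (ne_of_gt (rdot_self_pos (hΦ.nonzero _ (hbase.1 i))))

end Construct

/-- Lemma `M-V` of Reiner–Yun. Let `W` be the Weyl group of an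
(irreducible) simply-laced root system `Φ` with positive roots determined by the base
`Δ`, and highest root `α₀`. Then for any root `α`, the minimum Coxeter length
`d(α₀, α)` of a `w ∈ W` with `w(α₀) = α` equals `ht(α₀) - ht(α)` when `α` is positive,
and `ht(α₀) - ht(α) - 1` when `α` is negative. -/
theorem coset_length_eq_height_difference
    (ℓ : ℕ) (Φ : Finset (Fin ℓ → ℝ))
    (hΦ : IsCrystalRootSystem Φ) (hirr : IsIrreducibleRS Φ) (hsl : IsEqualLengthRS Φ)
    (Δ : Fin ℓ → (Fin ℓ → ℝ)) (C : (Fin ℓ → ℝ) → Fin ℓ → ℤ) (hbase : IsBase Φ Δ C)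
    (α₀ : Fin ℓ → ℝ) (hα₀ : α₀ ∈ Φ) (hhighest : ∀ β ∈ Φ, htC C β ≤ htC C α₀)
    (α : Fin ℓ → ℝ) (hα : α ∈ Φ) :
    ((∀ i, 0 ≤ C α i) → (wordDist Δ α₀ α : ℤ) = htC C α₀ - htC C α) ∧
    ((∀ i, C α i ≤ 0) → (wordDist Δ α₀ α : ℤ) = htC C α₀ - htC C α - 1) := by
  constructor
  · intro hpos
    have hle := hhighest α hα
    obtain ⟨w, hw, happ⟩ := word_to_pos hΦ hirr hsl hbase hα₀ hhighest
      (htC C α₀ - htC C α).toNat α hα hpos rfl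
    have hmem : (htC C α₀ - htC C α).toNat ∈
        {k | ∃ w : List (Fin ℓ), w.length = k ∧ applyWord Δ w α₀ = α} := ⟨w, hw, happ⟩
    have hub : wordDist Δ α₀ α ≤ (htC C α₀ - htC C α).toNat := Nat.sInf_le hmem
    have hlb : ∀ m ∈ {k | ∃ w : List (Fin ℓ), w.length = k ∧ applyWord Δ w α₀ = α},
        (htC C α₀ - htC C α).toNat ≤ m := by
      rintro m ⟨w', hl', ha'⟩
      have hb := modHt_word_bound hΦ hsl hbase hα₀ w'
      rw [ha', modHt_pos hpos, modHt_pos (alpha0_nonneg hΦ hbase hα₀ hhighest), hl'] at hb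
      have := abs_le.mp hb
      omega
    have heq : wordDist Δ α₀ α = (htC C α₀ - htC C α).toNat :=
      le_antisymm hub (le_csInf ⟨_, hmem⟩ hlb)
    rw [heq]
    omega
  · intro hneg
    have hle := hhighest α hα
    obtain ⟨w, hw, happ⟩ := word_to_neg hΦ hirr hsl hbase hα₀ hhighest
      (-htC C α).toNat α hα hneg rfl
    have hmem : w.length ∈
        {k | ∃ w' : List (Fin ℓ), w'.length = k ∧ applyWord Δ w' α₀ = α} := ⟨w, rfl, happ⟩
    have hub : wordDist Δ α₀ α ≤ w.length := Nat.sInf_le hmem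
    have hlb : ∀ m ∈ {k | ∃ w' : List (Fin ℓ), w'.length = k ∧ applyWord Δ w' α₀ = α},
        w.length ≤ m := by
      rintro m ⟨w', hl', ha'⟩
      have hb := modHt_word_bound hΦ hsl hbase hα₀ w'
      rw [ha', modHt_neg hΦ hbase hα hneg,
        modHt_pos (alpha0_nonneg hΦ hbase hα₀ hhighest), hl'] at hb
      have := abs_le.mp hb
      omega
    have heq : wordDist Δ α₀ α = w.length :=
      le_antisymm hub (le_csInf ⟨_, hmem⟩ hlb)
    rw [heq, hw]

end
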